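/- Let Q ∈ ℤ[x_1,…,x_n] be an integral polynomial, λ ∈ ℤ, q ≥ 1 an integer, Φ : ℝ^n → ℂ an arbitrary function, and ξ ∈ ℝ^n. Then ∑_{a ∈ U_q} ∑_{𝐚 ∈ Z_q^n} F_q(a,𝐚) e(−λa/q) Φ(ξ − 𝐚/q) = ∑_{d | q} μ(q/d) ∑_{a ∈ Z_d} ∑_{𝐚 ∈ Z_d^n} F_d(a,𝐚) e(−λa/d) Φ(ξ − 𝐚/d), where μ is the Möbius function and the inner sums on the left run over all a ∈ U_q and all 𝐚 ∈ Z_q^n. -/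

import Mathlib

open scoped BigOperators

noncomputable section

/-- `e(t) = e^{2πit}`. -/
def e2pi (t : ℝ) : ℂ := Complex.exp (2 * Real.pi * Complex.I * t)

/-- The normalized Weyl sum `F_d(a, 𝐚) = d^{-n} ∑_{s ∈ Z_d^n} e((a·Q(s) + s·𝐚)/d)`. -/
def weylF (n : ℕ) (Q : MvPolynomial (Fin n) ℤ) (d : ℕ) (a : ℤ) (av : Fin n → ℤ) : ℂ :=
  ((d : ℂ) ^ n)⁻¹ *
    ∑ s : Fin n → Fin d,
      e2pi (((a * MvPolynomial.eval (fun i => ((s i : ℕ) : ℤ)) Q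
        + ∑ i, ((s i : ℕ) : ℤ) * av i : ℤ) : ℝ) / (d : ℝ))

namespace Stmt7Aux


lemma e2pi_add (x y : ℝ) : e2pi (x + y) = e2pi x * e2pi y := by
  simp [e2pi, mul_add, Complex.exp_add]

lemma e2pi_int (k : ℤ) : e2pi (k : ℝ) = 1 := by
  have := Complex.exp_int_mul_two_pi_mul_I k
  rw [e2pi, ← this]
  norm_cast
  ring_nf

lemma e2pi_int_add (k : ℤ) (x : ℝ) : e2pi ((k : ℝ) + x) = e2pi x := by
  rw [e2pi_add, e2pi_int, one_mul]

lemma e2pi_eq_one_iff {x : ℝ} : e2pi x = 1 ↔ ∃ k : ℤ, x = (k : ℝ) := by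
  rw [e2pi, Complex.exp_eq_one_iff]
  constructor
  · rintro ⟨k, hk⟩
    refine ⟨k, ?_⟩
    have h2 : (2 * Real.pi * Complex.I : ℂ) ≠ 0 := by
      refine mul_ne_zero (mul_ne_zero two_ne_zero ?_) Complex.I_ne_zero
      exact_mod_cast Real.pi_ne_zero
    have : (x : ℂ) = (k : ℂ) := by
      refine mul_left_cancel₀ h2 ?_
      rw [hk]; ring
    exact_mod_cast this
  · rintro ⟨k, rfl⟩
    exact ⟨k, by push_cast; ring⟩

lemma e2pi_nat_mul (k : ℕ) (x : ℝ) : e2pi ((k : ℝ) * x) = e2pi x ^ k := by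
  rw [e2pi, e2pi, ← Complex.exp_nat_mul]
  push_cast
  ring_nf

lemma e2pi_sum {ι : Type*} (s : Finset ι) (f : ι → ℝ) :
    e2pi (∑ i ∈ s, f i) = ∏ i ∈ s, e2pi (f i) := by
  have : (2 * Real.pi * Complex.I * ((∑ i ∈ s, f i : ℝ) : ℂ)) = ∑ i ∈ s, 2 * Real.pi * Complex.I * (f i : ℂ) := by
    push_cast
    rw [Finset.mul_sum]
  rw [e2pi, this, Complex.exp_sum]
  rfl

lemma sum_e2pi_fin (g : ℕ) (hg : 0 < g) (m : ℤ) :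
    ∑ u : Fin g, e2pi ((u : ℝ) * ((m : ℝ) / (g : ℝ))) = if (g : ℤ) ∣ m then (g : ℂ) else 0 := by
  have hz : ∀ u : Fin g, e2pi ((u : ℝ) * ((m : ℝ) / (g : ℝ))) = e2pi ((m : ℝ) / g) ^ (u : ℕ) := by
    intro u; rw [← e2pi_nat_mul]
  simp only [hz]
  by_cases hd : (g : ℤ) ∣ m
  · obtain ⟨c, rfl⟩ := hd
    have : ((g * c : ℤ) : ℝ) / (g : ℝ) = (c : ℝ) := by
      push_cast; field_simp
    rw [if_pos ⟨c, rfl⟩, this, e2pi_int]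
    simp
  · have hne : e2pi ((m : ℝ) / g) ≠ 1 := by
      rw [Ne, e2pi_eq_one_iff]
      rintro ⟨k, hk⟩
      apply hd
      refine ⟨k, ?_⟩
      have : (m : ℝ) = (g : ℝ) * (k : ℝ) := by
        field_simp at hk
        linarith [hk]
      exact_mod_cast this
    have hpow : e2pi ((m : ℝ) / g) ^ g = 1 := by
      rw [← e2pi_nat_mul]
      have : (g : ℝ) * ((m : ℝ) / g) = (m : ℝ) := by
        field_simp
      rw [this, e2pi_int]
    rw [if_neg hd, Fin.sum_univ_eq_sum_range, geom_sum_eq hne]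
    rw [hpow]
    simp



lemma eval_modEq {n : ℕ} (m : ℤ) (Q : MvPolynomial (Fin n) ℤ) (x y : Fin n → ℤ)
    (h : ∀ i, x i ≡ y i [ZMOD m]) :
    MvPolynomial.eval x Q ≡ MvPolynomial.eval y Q [ZMOD m] := by
  induction Q using MvPolynomial.induction_on with
  | C a => simp [Int.ModEq.refl]
  | add p q hp hq => simpa using hp.add hq
  | mul_X p i hp => simpa using hp.mul (h i)



lemma weylF_split {n : ℕ} (Q : MvPolynomial (Fin n) ℤ) (e g : ℕ) (he : 0 < e) (hg : 0 < g)
    (a' : ℤ) (av : Fin n → ℤ) :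
    weylF n Q (g * e) ((g : ℤ) * a') av =
      (((g * e : ℕ) : ℂ) ^ n)⁻¹ *
        ((∏ i, ∑ w : Fin g, e2pi ((w : ℝ) * ((av i : ℝ) / (g : ℝ)))) *
          ∑ t : Fin n → Fin e,
            e2pi ((((g : ℤ) * (a' * MvPolynomial.eval (fun i => ((t i : ℕ) : ℤ)) Q)
              + ∑ i, ((t i : ℕ) : ℤ) * av i : ℤ) : ℝ) / ((g * e : ℕ) : ℝ))) := by
  rw [weylF]
  congr 1
  -- the equivalence (Fin n → Fin g) × (Fin n → Fin e) ≃ (Fin n → Fin (g * e))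
  set E : ((Fin n → Fin g) × (Fin n → Fin e)) ≃ (Fin n → Fin (g * e)) :=
    (Equiv.arrowProdEquivProdArrow (Fin n) (fun _ => Fin g) (fun _ => Fin e)).symm.trans
      (Equiv.piCongrRight fun _ => finProdFinEquiv) with hE
  rw [← Equiv.sum_comp E, Fintype.sum_prod_type]
  have hEval : ∀ (u : Fin n → Fin g) (t : Fin n → Fin e) (i : Fin n),
      ((E (u, t) i : ℕ) : ℤ) = (t i : ℕ) + e * (u i : ℕ) := by
    intro u t i
    simp [hE, Equiv.arrowProdEquivProdArrow, finProdFinEquiv_apply_val]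
  have key : ∀ (u : Fin n → Fin g) (t : Fin n → Fin e),
      e2pi (((((g : ℤ) * a') * MvPolynomial.eval (fun i => ((E (u, t) i : ℕ) : ℤ)) Q
          + ∑ i, ((E (u, t) i : ℕ) : ℤ) * av i : ℤ) : ℝ) / ((g * e : ℕ) : ℝ))
        = (∏ i, e2pi ((u i : ℝ) * ((av i : ℝ) / (g : ℝ)))) *
          e2pi ((((g : ℤ) * (a' * MvPolynomial.eval (fun i => ((t i : ℕ) : ℤ)) Q)
              + ∑ i, ((t i : ℕ) : ℤ) * av i : ℤ) : ℝ) / ((g * e : ℕ) : ℝ)) := by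
    intro u t
    obtain ⟨k, hk⟩ : ∃ k : ℤ, MvPolynomial.eval (fun i => ((E (u, t) i : ℕ) : ℤ)) Q
        = MvPolynomial.eval (fun i => ((t i : ℕ) : ℤ)) Q + e * k := by
      have hme : ∀ i, ((E (u, t) i : ℕ) : ℤ) ≡ ((t i : ℕ) : ℤ) [ZMOD (e : ℤ)] := by
        intro i
        rw [Int.modEq_iff_dvd, hEval]
        exact ⟨-((u i : ℕ) : ℤ), by push_cast; ring⟩
      have h2 := eval_modEq (e : ℤ) Q _ _ hme
      rw [Int.modEq_iff_dvd] at h2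
      obtain ⟨c, hc⟩ := h2
      exact ⟨-c, by linarith⟩
    have hnum : ((g : ℤ) * a') * MvPolynomial.eval (fun i => ((E (u, t) i : ℕ) : ℤ)) Q
          + ∑ i, ((E (u, t) i : ℕ) : ℤ) * av i
        = ((g : ℤ) * e) * (a' * k) + e * (∑ i, ((u i : ℕ) : ℤ) * av i)
          + ((g : ℤ) * (a' * MvPolynomial.eval (fun i => ((t i : ℕ) : ℤ)) Q)
              + ∑ i, ((t i : ℕ) : ℤ) * av i) := by
      rw [hk]
      have hs : ∀ i ∈ Finset.univ, ((E (u, t) i : ℕ) : ℤ) * av i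
          = ((t i : ℕ) : ℤ) * av i + e * (((u i : ℕ) : ℤ) * av i) := by
        intro i _
        rw [hEval]; ring
      rw [Finset.sum_congr rfl hs, Finset.sum_add_distrib, ← Finset.mul_sum]
      ring
    have harg : ((((g : ℤ) * a') * MvPolynomial.eval (fun i => ((E (u, t) i : ℕ) : ℤ)) Q
          + ∑ i, ((E (u, t) i : ℕ) : ℤ) * av i : ℤ) : ℝ) / ((g * e : ℕ) : ℝ)
        = ((a' * k : ℤ) : ℝ) +
            (((∑ i, ((u i : ℕ) : ℤ) * av i : ℤ) : ℝ) / (g : ℝ) +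
              (((g : ℤ) * (a' * MvPolynomial.eval (fun i => ((t i : ℕ) : ℤ)) Q)
                + ∑ i, ((t i : ℕ) : ℤ) * av i : ℤ) : ℝ) / ((g * e : ℕ) : ℝ)) := by
      rw [hnum]
      have hg' : (g : ℝ) ≠ 0 := by positivity
      have he' : (e : ℝ) ≠ 0 := by positivity
      push_cast
      field_simp
      ring
    rw [harg, e2pi_int_add, e2pi_add]
    congr 1
    have : ((∑ i, ((u i : ℕ) : ℤ) * av i : ℤ) : ℝ) / (g : ℝ)
        = ∑ i, ((u i : ℕ) : ℝ) * ((av i : ℝ) / (g : ℝ)) := by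
      push_cast
      rw [Finset.sum_div]
      exact Finset.sum_congr rfl fun i _ => by ring
    rw [this, e2pi_sum]
  calc
    ∑ u : Fin n → Fin g, ∑ t : Fin n → Fin e,
        e2pi (((((g : ℤ) * a') * MvPolynomial.eval (fun i => ((E (u, t) i : ℕ) : ℤ)) Q
          + ∑ i, ((E (u, t) i : ℕ) : ℤ) * av i : ℤ) : ℝ) / ((g * e : ℕ) : ℝ))
      = ∑ u : Fin n → Fin g, (∏ i, e2pi ((u i : ℝ) * ((av i : ℝ) / (g : ℝ)))) *
          ∑ t : Fin n → Fin e,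
            e2pi ((((g : ℤ) * (a' * MvPolynomial.eval (fun i => ((t i : ℕ) : ℤ)) Q)
              + ∑ i, ((t i : ℕ) : ℤ) * av i : ℤ) : ℝ) / ((g * e : ℕ) : ℝ)) := by
        refine Finset.sum_congr rfl fun u _ => ?_
        rw [Finset.mul_sum]
        exact Finset.sum_congr rfl fun t _ => key u t
    _ = (∏ i, ∑ w : Fin g, e2pi ((w : ℝ) * ((av i : ℝ) / (g : ℝ)))) *
          ∑ t : Fin n → Fin e,
            e2pi ((((g : ℤ) * (a' * MvPolynomial.eval (fun i => ((t i : ℕ) : ℤ)) Q)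
              + ∑ i, ((t i : ℕ) : ℤ) * av i : ℤ) : ℝ) / ((g * e : ℕ) : ℝ)) := by
        rw [← Finset.sum_mul]
        congr 1
        rw [Finset.prod_univ_sum]
        rw [Fintype.piFinset_univ]





lemma weylF_eq_zero {n : ℕ} (Q : MvPolynomial (Fin n) ℤ) (e g : ℕ) (he : 0 < e) (hg : 0 < g)
    (a' : ℤ) (av : Fin n → ℤ) (h : ¬ ∀ i, (g : ℤ) ∣ av i) :
    weylF n Q (g * e) ((g : ℤ) * a') av = 0 := by
  rw [weylF_split Q e g he hg]
  obtain ⟨i, hi⟩ := not_forall.mp h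
  have hz : ∑ w : Fin g, e2pi ((w : ℝ) * ((av i : ℝ) / (g : ℝ))) = 0 := by
    rw [sum_e2pi_fin g hg (av i), if_neg hi]
  rw [Finset.prod_eq_zero (Finset.mem_univ i) hz]
  simp

lemma weylF_scale {n : ℕ} (Q : MvPolynomial (Fin n) ℤ) (e g : ℕ) (he : 0 < e) (hg : 0 < g)
    (a' : ℤ) (b : Fin n → ℤ) :
    weylF n Q (g * e) ((g : ℤ) * a') (fun i => (g : ℤ) * b i) = weylF n Q e a' b := by
  rw [weylF_split Q e g he hg, weylF]
  have hprod : (∏ i : Fin n, ∑ w : Fin g,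
      e2pi ((w : ℝ) * ((((g : ℤ) * b i : ℤ) : ℝ) / (g : ℝ)))) = (g : ℂ) ^ n := by
    have : ∀ i : Fin n, (∑ w : Fin g, e2pi ((w : ℝ) * ((((g : ℤ) * b i : ℤ) : ℝ) / (g : ℝ))))
        = (g : ℂ) := by
      intro i
      rw [sum_e2pi_fin g hg ((g : ℤ) * b i), if_pos (dvd_mul_right _ _)]
    rw [Finset.prod_congr rfl fun i _ => this i, Finset.prod_const, Finset.card_univ,
      Fintype.card_fin]
  rw [hprod]
  have hsum : ∀ t : Fin n → Fin e,
      ((((g : ℤ) * (a' * MvPolynomial.eval (fun i => ((t i : ℕ) : ℤ)) Q)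
          + ∑ i, ((t i : ℕ) : ℤ) * ((g : ℤ) * b i) : ℤ) : ℝ) / ((g * e : ℕ) : ℝ))
        = (((a' * MvPolynomial.eval (fun i => ((t i : ℕ) : ℤ)) Q
          + ∑ i, ((t i : ℕ) : ℤ) * b i : ℤ) : ℝ) / (e : ℝ)) := by
    intro t
    have hz : (g : ℤ) * (a' * MvPolynomial.eval (fun i => ((t i : ℕ) : ℤ)) Q)
          + ∑ i, ((t i : ℕ) : ℤ) * ((g : ℤ) * b i)
        = (g : ℤ) * (a' * MvPolynomial.eval (fun i => ((t i : ℕ) : ℤ)) Q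
          + ∑ i, ((t i : ℕ) : ℤ) * b i) := by
      have : ∀ i ∈ Finset.univ, ((t i : ℕ) : ℤ) * ((g : ℤ) * b i)
          = (g : ℤ) * (((t i : ℕ) : ℤ) * b i) := fun i _ => by ring
      rw [Finset.sum_congr rfl this, ← Finset.mul_sum]
      ring
    rw [hz]
    have hg' : (g : ℝ) ≠ 0 := by positivity
    have he' : (e : ℝ) ≠ 0 := by positivity
    push_cast
    field_simp
  rw [Finset.sum_congr rfl fun t _ => congrArg e2pi (hsum t)]
  have hc : ((((g * e : ℕ) : ℂ)) ^ n)⁻¹ * ((g : ℂ) ^ n * ∑ t : Fin n → Fin e,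
      e2pi ((((a' * MvPolynomial.eval (fun i => ((t i : ℕ) : ℤ)) Q
          + ∑ i, ((t i : ℕ) : ℤ) * b i : ℤ) : ℝ) / (e : ℝ))))
      = ((e : ℂ) ^ n)⁻¹ * ∑ t : Fin n → Fin e,
      e2pi ((((a' * MvPolynomial.eval (fun i => ((t i : ℕ) : ℤ)) Q
          + ∑ i, ((t i : ℕ) : ℤ) * b i : ℤ) : ℝ) / (e : ℝ))) := by
    have hg' : (g : ℂ) ≠ 0 := by exact_mod_cast hg.ne'
    have he' : (e : ℂ) ≠ 0 := by exact_mod_cast he.ne'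
    push_cast
    rw [mul_pow]
    field_simp
  rw [hc]





lemma stepB {n : ℕ} (Q : MvPolynomial (Fin n) ℤ) (lam : ℤ) (Φ : (Fin n → ℝ) → ℂ)
    (ξ : Fin n → ℝ) (e g d : ℕ) (hd : d = g * e) (he : 0 < e) (hg : 0 < g) (a' : ℕ) :
    ∑ av : Fin n → Fin d,
        weylF n Q d ((g * a' : ℕ) : ℤ) (fun i => ((av i : ℕ) : ℤ)) *
          e2pi (-((lam : ℝ) * ((g * a' : ℕ) : ℝ) / (d : ℝ))) *
          Φ (ξ - fun i => ((av i : ℕ) : ℝ) / (d : ℝ))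
    = ∑ av : Fin n → Fin e,
        weylF n Q e ((a' : ℕ) : ℤ) (fun i => ((av i : ℕ) : ℤ)) *
          e2pi (-((lam : ℝ) * ((a' : ℕ) : ℝ) / (e : ℝ))) *
          Φ (ξ - fun i => ((av i : ℕ) : ℝ) / (e : ℝ)) := by
  subst hd
  have hgz : ((g * a' : ℕ) : ℤ) = (g : ℤ) * (a' : ℤ) := by push_cast; ring
  have hge' : ((g * e : ℕ) : ℝ) ≠ 0 := by positivity
  have hgr : (g : ℝ) ≠ 0 := by positivity
  have her : (e : ℝ) ≠ 0 := by positivity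
  -- the e2pi phase factor is the same
  have hphase : (-((lam : ℝ) * ((g * a' : ℕ) : ℝ) / ((g * e : ℕ) : ℝ)))
      = (-((lam : ℝ) * ((a' : ℕ) : ℝ) / (e : ℝ))) := by
    push_cast
    field_simp
  rw [show (fun av : Fin n → Fin (g * e) =>
      weylF n Q (g * e) ((g * a' : ℕ) : ℤ) (fun i => ((av i : ℕ) : ℤ)) *
        e2pi (-((lam : ℝ) * ((g * a' : ℕ) : ℝ) / ((g * e : ℕ) : ℝ))) *
        Φ (ξ - fun i => ((av i : ℕ) : ℝ) / ((g * e : ℕ) : ℝ))) = fun av =>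
      weylF n Q (g * e) ((g : ℤ) * (a' : ℤ)) (fun i => ((av i : ℕ) : ℤ)) *
        e2pi (-((lam : ℝ) * ((a' : ℕ) : ℝ) / (e : ℝ))) *
        Φ (ξ - fun i => ((av i : ℕ) : ℝ) / ((g * e : ℕ) : ℝ))
    from funext fun av => by rw [hgz, hphase]]
  -- restrict to av divisible by g
  rw [← Finset.sum_filter_of_ne (p := fun av : Fin n → Fin (g * e) => ∀ i, g ∣ (av i : ℕ))
    (by
      intro av _ hne
      by_contra hdvd
      apply hne
      have : ¬ ∀ i, (g : ℤ) ∣ ((av i : ℕ) : ℤ) := by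
        intro hall
        exact hdvd fun i => Int.ofNat_dvd.mp (by exact_mod_cast hall i)
      rw [weylF_eq_zero Q e g he hg (a' : ℤ) _ this]
      simp)]
  -- now reindex by av = g * b
  refine Finset.sum_nbij'
    (i := fun av => fun j => (⟨(av j : ℕ) / g, by
      rw [Nat.div_lt_iff_lt_mul hg]
      calc ((av j : ℕ)) < g * e := (av j).isLt
      _ = e * g := by ring⟩ : Fin e))
    (j := fun b => fun j => (⟨g * (b j : ℕ), by
      exact (Nat.mul_lt_mul_left hg).mpr (b j).isLt⟩ : Fin (g * e)))
    ?_ ?_ ?_ ?_ ?_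
  · intro av _; exact Finset.mem_univ _
  · intro b _
    rw [Finset.mem_filter]
    exact ⟨Finset.mem_univ _, fun i => dvd_mul_right _ _⟩
  · intro av hav
    rw [Finset.mem_filter] at hav
    funext j
    ext
    exact Nat.mul_div_cancel' (hav.2 j)
  · intro b _
    funext j
    ext
    exact Nat.mul_div_cancel_left _ hg
  · intro av hav
    rw [Finset.mem_filter] at hav
    have hb : ∀ j, (av j : ℕ) = g * ((av j : ℕ) / g) := fun j =>
      (Nat.mul_div_cancel' (hav.2 j)).symm
    have h1 : (fun i => ((av i : ℕ) : ℤ)) = fun i => (g : ℤ) * (((av i : ℕ) / g : ℕ) : ℤ) := by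
      funext i
      conv_lhs => rw [hb i]
      rw [Nat.cast_mul]
    have h2 : (fun i => ((av i : ℕ) : ℝ) / ((g * e : ℕ) : ℝ))
        = fun i => (((av i : ℕ) / g : ℕ) : ℝ) / (e : ℝ) := by
      funext i
      conv_lhs => rw [hb i]
      push_cast
      field_simp
    rw [h1, h2, weylF_scale Q e g he hg (a' : ℤ)]





lemma stepA (d : ℕ) (hd : 0 < d) (f : ℕ → ℂ) :
    ∑ a ∈ Finset.range d, f a
      = ∑ e ∈ d.divisors, ∑ a ∈ (Finset.range e).filter (fun a => Nat.gcd a e = 1),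
          f (d / e * a) := by
  rw [Finset.sum_sigma']
  refine Finset.sum_nbij' (i := fun a => ⟨d / Nat.gcd a d, a / Nat.gcd a d⟩)
    (j := fun p => d / p.1 * p.2) ?_ ?_ ?_ ?_ ?_
  · intro a ha
    rw [Finset.mem_range] at ha
    have hg0 : 0 < Nat.gcd a d := Nat.gcd_pos_of_pos_right a hd
    rw [Finset.mem_sigma, Nat.mem_divisors, Finset.mem_filter, Finset.mem_range]
    refine ⟨⟨Nat.div_dvd_of_dvd (Nat.gcd_dvd_right a d), hd.ne'⟩,
      Nat.div_lt_div_of_lt_of_dvd (Nat.gcd_dvd_right a d) ha,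
      Nat.coprime_div_gcd_div_gcd hg0⟩
  · rintro ⟨e, a⟩ hp
    rw [Finset.mem_sigma, Nat.mem_divisors, Finset.mem_filter, Finset.mem_range] at hp
    obtain ⟨⟨hed, hd0⟩, hae, -⟩ := hp
    have he0 : 0 < e := Nat.pos_of_dvd_of_pos hed hd
    have hq0 : 0 < d / e := Nat.div_pos (Nat.le_of_dvd hd hed) he0
    rw [Finset.mem_range]
    calc d / e * a < d / e * e := by exact (Nat.mul_lt_mul_left hq0).mpr hae
    _ = d := Nat.div_mul_cancel hed
  · intro a ha
    rw [Finset.mem_range] at ha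
    have hg0 : 0 < Nat.gcd a d := Nat.gcd_pos_of_pos_right a hd
    simp only
    rw [Nat.div_div_self (Nat.gcd_dvd_right a d) hd.ne', Nat.mul_div_cancel' (Nat.gcd_dvd_left a d)]
  · rintro ⟨e, a⟩ hp
    rw [Finset.mem_sigma, Nat.mem_divisors, Finset.mem_filter, Finset.mem_range] at hp
    obtain ⟨⟨hed, hd0⟩, hae, hcop⟩ := hp
    have he0 : 0 < e := Nat.pos_of_dvd_of_pos hed hd
    have hq0 : 0 < d / e := Nat.div_pos (Nat.le_of_dvd hd hed) he0
    have hde : d / e * e = d := Nat.div_mul_cancel hed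
    have hgcd : Nat.gcd (d / e * a) d = d / e := by
      nth_rewrite 2 [← hde]
      rw [Nat.gcd_mul_left, hcop, mul_one]
    simp only
    have h1 : d / (d / e) = e := Nat.div_div_self hed hd.ne'
    refine Sigma.ext ?_ ?_
    · simp only [hgcd, h1]
    · simp only [hgcd]
      rw [Nat.mul_div_cancel_left a hq0]
  · intro a ha
    rw [Finset.mem_range] at ha
    congr 1
    rw [Nat.div_div_self (Nat.gcd_dvd_right a d) hd.ne',
      Nat.mul_div_cancel' (Nat.gcd_dvd_left a d)]


end Stmt7Aux

theorem stmt7 (n : ℕ) (hn : 1 ≤ n) (Q : MvPolynomial (Fin n) ℤ)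
    (lam : ℤ) (q : ℕ) (hq : 1 ≤ q)
    (Φ : (Fin n → ℝ) → ℂ) (ξ : Fin n → ℝ) :
    ∑ a ∈ (Finset.range q).filter (fun a => Nat.gcd a q = 1),
      ∑ av : Fin n → Fin q,
        weylF n Q q (a : ℤ) (fun i => ((av i : ℕ) : ℤ)) *
          e2pi (-((lam : ℝ) * (a : ℝ) / (q : ℝ))) *
          Φ (ξ - fun i => ((av i : ℕ) : ℝ) / (q : ℝ)) =
    ∑ d ∈ q.divisors, (ArithmeticFunction.moebius (q / d) : ℂ) *
      ∑ a ∈ Finset.range d, ∑ av : Fin n → Fin d,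
        weylF n Q d (a : ℤ) (fun i => ((av i : ℕ) : ℤ)) *
          e2pi (-((lam : ℝ) * (a : ℝ) / (d : ℝ))) *
          Φ (ξ - fun i => ((av i : ℕ) : ℝ) / (d : ℝ)) := by
  classical
  have key : ∀ d : ℕ, d > 0 →
      ∑ e ∈ d.divisors,
        (fun e : ℕ => ∑ a ∈ (Finset.range e).filter (fun a => Nat.gcd a e = 1),
          ∑ av : Fin n → Fin e,
            weylF n Q e (a : ℤ) (fun i => ((av i : ℕ) : ℤ)) *
              e2pi (-((lam : ℝ) * (a : ℝ) / (e : ℝ))) *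
              Φ (ξ - fun i => ((av i : ℕ) : ℝ) / (e : ℝ))) e
      = (fun d : ℕ => ∑ a ∈ Finset.range d, ∑ av : Fin n → Fin d,
            weylF n Q d (a : ℤ) (fun i => ((av i : ℕ) : ℤ)) *
              e2pi (-((lam : ℝ) * (a : ℝ) / (d : ℝ))) *
              Φ (ξ - fun i => ((av i : ℕ) : ℝ) / (d : ℝ))) d := by
    intro d hd
    simp only
    rw [Stmt7Aux.stepA d hd (fun a => ∑ av : Fin n → Fin d,
      weylF n Q d (a : ℤ) (fun i => ((av i : ℕ) : ℤ)) *
        e2pi (-((lam : ℝ) * (a : ℝ) / (d : ℝ))) *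
        Φ (ξ - fun i => ((av i : ℕ) : ℝ) / (d : ℝ)))]
    refine Finset.sum_congr rfl fun e heDiv => ?_
    rw [Nat.mem_divisors] at heDiv
    have he0 : 0 < e := Nat.pos_of_dvd_of_pos heDiv.1 hd
    have hg0 : 0 < d / e := Nat.div_pos (Nat.le_of_dvd hd heDiv.1) he0
    have hde : d = d / e * e := (Nat.div_mul_cancel heDiv.1).symm
    refine Finset.sum_congr rfl fun a' ha' => ?_
    exact (Stmt7Aux.stepB Q lam Φ ξ e (d / e) d hde he0 hg0 a').symm
  have h2 := (ArithmeticFunction.sum_eq_iff_sum_mul_moebius_eq (R := ℂ)).mp key q hq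
  rw [← h2, Nat.sum_divisorsAntidiagonal'
    (f := fun a b => ((ArithmeticFunction.moebius a : ℤ) : ℂ) *
      ∑ x ∈ Finset.range b, ∑ av : Fin n → Fin b,
        weylF n Q b (x : ℤ) (fun i => ((av i : ℕ) : ℤ)) *
          e2pi (-((lam : ℝ) * (x : ℝ) / (b : ℝ))) *
          Φ (ξ - fun i => ((av i : ℕ) : ℝ) / (b : ℝ)))]
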